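/- arXiv:math/9903080 — 2 statements merged into one kernel-verified Lean document; each statement's English description precedes it below -/
import Mathlib

section
/- For the open Toda lattice of dimension 2k+1 (k ≥ 1), let D_λ := det(ι(v) + λ·I_{k+1}), a polynomial in v₀, …, v_{2k} and λ. Then for every λ ∈ ℂ the function D_λ is a Casimir polynomial for the bracket λΠ₁ + Π₂: for every j ∈ {0, …, 2k}, the identity Σ_{i=0}^{2k} (∂D_λ/∂v_i) · (λΠ₁(v) + Π₂(v))_{ij} = 0 holds identically as a polynomial in v₀, …, v_{2k} and λ. -/
open Matrix MvPolynomial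

noncomputable section

/-- The first Toda bracket matrix `Π₁`. -/
def toda1 (k : ℕ) : Matrix (Fin (2 * k + 1)) (Fin (2 * k + 1))
    (MvPolynomial (Fin (2 * k + 1)) ℂ) :=
  Matrix.of fun i j =>
    if j.val = i.val + 1 then (if Even i.val then -X j else -X i)
    else if i.val = j.val + 1 then (if Even j.val then X i else X j)
    else 0

/-- The second Toda bracket matrix `Π₂`. -/
def toda2 (k : ℕ) : Matrix (Fin (2 * k + 1)) (Fin (2 * k + 1))
    (MvPolynomial (Fin (2 * k + 1)) ℂ) :=
  Matrix.of fun i j =>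
    if j.val = i.val + 1 then -(X i * X j)
    else if i.val = j.val + 1 then X i * X j
    else if h : j.val = i.val + 2 then
      (if Even i.val then
        -2 * (X (⟨i.val + 1, by have := j.isLt; omega⟩ : Fin (2 * k + 1))) ^ 2
       else C (-(1/2) : ℂ) * (X i * X j))
    else if h' : i.val = j.val + 2 then
      (if Even j.val then
        2 * (X (⟨j.val + 1, by have := i.isLt; omega⟩ : Fin (2 * k + 1))) ^ 2
       else C ((1/2) : ℂ) * (X i * X j))
    else 0

/-- The symmetric tridiagonal matrix `ι(v)`. -/
def iotaMat (k : ℕ) : Matrix (Fin (k + 1)) (Fin (k + 1))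
    (MvPolynomial (Fin (2 * k + 1)) ℂ) :=
  Matrix.of fun i j =>
    if i = j then X (⟨2 * i.val, by have := i.isLt; omega⟩ : Fin (2 * k + 1))
    else if h : j.val = i.val + 1 then
      X (⟨2 * i.val + 1, by have := j.isLt; omega⟩ : Fin (2 * k + 1))
    else if h' : i.val = j.val + 1 then
      X (⟨2 * j.val + 1, by have := i.isLt; omega⟩ : Fin (2 * k + 1))
    else 0

abbrev R2 : Type := MvPolynomial ℕ ℂ

def av (lam : ℂ) (l : ℕ) : R2 := C lam + X (2*l)
def bv (l : ℕ) : R2 := X (2*l+1)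

def TT (lam : ℂ) : ℕ → ℕ → R2
  | _, 0 => 1
  | l, 1 => av lam l
  | l, (n+2) => av lam l * TT lam (l+1) (n+1) - bv l ^ 2 * TT lam (l+2) n

lemma TT_zero (lam : ℂ) (l : ℕ) : TT lam l 0 = 1 := rfl
lemma TT_one (lam : ℂ) (l : ℕ) : TT lam l 1 = av lam l := rfl
lemma TT_left (lam : ℂ) (l n : ℕ) :
    TT lam l (n+2) = av lam l * TT lam (l+1) (n+1) - bv l ^ 2 * TT lam (l+2) n := rfl

lemma TT_right (lam : ℂ) : ∀ n l, TT lam l (n+2)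
    = av lam (l+n+1) * TT lam l (n+1) - bv (l+n) ^ 2 * TT lam l n := by
  intro n
  induction n using Nat.twoStepInduction with
  | zero =>
      intro l
      rw [show (0:ℕ)+2 = 0+2 from rfl, TT_left, show l+0+1 = l+1 by omega,
        show l+0 = l by omega]
      simp only [TT_one, TT_zero, show (0:ℕ)+1 = 1 from rfl]
      ring
  | one =>
      intro l
      rw [show (1:ℕ)+2 = 1+2 from rfl, TT_left lam l 1, TT_left lam (l+1) 0,
        show (1:ℕ)+1 = 0+2 from rfl, TT_left lam l 0,
        show l+1+1 = l+2 by omega, show l+1+0+1 = l+2 by omega]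
      simp only [TT_one, TT_zero, show (0:ℕ)+1 = 1 from rfl]
      ring
  | more n ih1 ih2 =>
    intro l
    rw [TT_left lam l (n+2), show n+2+1 = n+1+2 by omega, ih2 (l+1), ih1 (l+2),
      TT_left lam l (n+1), TT_left lam l n,
      show l+1+(n+1)+1 = l+(n+2)+1 by omega, show l+1+(n+1) = l+(n+2) by omega,
      show l+2+n+1 = l+(n+2)+1 by omega, show l+2+n = l+(n+2) by omega,
      show n+1+1 = n+2 by omega]
    ring

lemma pd_av_even (lam : ℂ) (i l : ℕ) :
    pderiv i (av lam l) = if i = 2*l then 1 else 0 := by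
  rcases eq_or_ne i (2*l) with h|h
  · subst h; simp [av]
  · simp [av, pderiv_X_of_ne (Ne.symm h), h]

lemma pd_bv (i l : ℕ) : pderiv i (bv l) = if i = 2*l+1 then 1 else 0 := by
  rcases eq_or_ne i (2*l+1) with h|h
  · subst h; simp [bv]
  · simp [bv, pderiv_X_of_ne (Ne.symm h), h]

lemma dT_even_out (lam : ℂ) : ∀ n l i, (i < l ∨ l + n ≤ i) →
    pderiv (2*i) (TT lam l n) = 0 := by
  intro n
  induction n using Nat.twoStepInduction with
  | zero => intro l i _; rw [TT_zero]; exact pderiv_one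
  | one => intro l i h; rw [TT_one, pd_av_even, if_neg (by omega)]
  | more n ih1 ih2 =>
    intro l i h
    rw [TT_left]
    simp only [map_sub, pderiv_mul, pderiv_pow, pd_av_even, pd_bv,
      if_neg (show ¬ 2*i = 2*l by omega), if_neg (show ¬ 2*i = 2*l+1 by omega),
      ih2 (l+1) i (by omega), ih1 (l+2) i (by omega)]
    ring

lemma dT_odd_out (lam : ℂ) : ∀ n l i, (i < l ∨ l + n ≤ i + 1) →
    pderiv (2*i+1) (TT lam l n) = 0 := by
  intro n
  induction n using Nat.twoStepInduction with
  | zero => intro l i _; rw [TT_zero]; exact pderiv_one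
  | one => intro l i h; rw [TT_one, pd_av_even, if_neg (by omega)]
  | more n ih1 ih2 =>
    intro l i h
    rw [TT_left]
    simp only [map_sub, pderiv_mul, pderiv_pow, pd_av_even, pd_bv,
      if_neg (show ¬ 2*i+1 = 2*l by omega), if_neg (show ¬ 2*i+1 = 2*l+1 by omega),
      ih2 (l+1) i (by omega), ih1 (l+2) i (by omega)]
    ring

lemma dT_even (lam : ℂ) : ∀ n l i, l ≤ i → i < l + n →
    pderiv (2*i) (TT lam l n) = TT lam l (i-l) * TT lam (i+1) (l+n-1-i) := by
  intro n
  induction n using Nat.twoStepInduction with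
  | zero => intro l i h1 h2; omega
  | one =>
    intro l i h1 h2
    have : i = l := by omega
    subst this
    rw [TT_one, pd_av_even, if_pos rfl, Nat.sub_self, show i+1-1-i = 0 by omega,
      TT_zero, TT_zero]
    ring
  | more n ih1 ih2 =>
    intro l i h1 h2
    rw [TT_left]
    simp only [map_sub, pderiv_mul, pderiv_pow, pd_av_even, pd_bv,
      if_neg (show ¬ 2*i = 2*l+1 by omega)]
    rcases eq_or_ne i l with heq|hne
    · subst heq
      rw [if_pos rfl, dT_even_out lam (n+1) (i+1) i (by omega),
        dT_even_out lam n (i+2) i (by omega), Nat.sub_self,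
        show i+(n+2)-1-i = n+1 by omega, TT_zero]
      ring
    · rw [if_neg (show ¬ 2*i = 2*l by omega)]
      rcases eq_or_ne i (l+1) with rfl|hne2
      · rw [ih2 (l+1) (l+1) (by omega) (by omega),
          dT_even_out lam n (l+2) (l+1) (by omega), Nat.sub_self,
          show l+1+(n+1)-1-(l+1) = l+(n+2)-1-(l+1) by omega,
          show l+1-l = 1 by omega, TT_zero, TT_one]
        ring
      · rw [ih2 (l+1) i (by omega) (by omega), ih1 (l+2) i (by omega) (by omega),
          show l+1+(n+1)-1-i = l+(n+2)-1-i by omega,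
          show l+2+n-1-i = l+(n+2)-1-i by omega,
          show i-l = (i-(l+2))+2 by omega, TT_left,
          show i-(l+2)+1 = i-(l+1) by omega]
        ring

lemma dT_odd (lam : ℂ) : ∀ n l i, l ≤ i → i + 1 < l + n →
    pderiv (2*i+1) (TT lam l n) =
      -(2*bv i) * (TT lam l (i-l) * TT lam (i+2) (l+n-2-i)) := by
  intro n
  induction n using Nat.twoStepInduction with
  | zero => intro l i h1 h2; omega
  | one => intro l i h1 h2; omega
  | more n ih1 ih2 =>
    intro l i h1 h2
    rw [TT_left]
    simp only [map_sub, pderiv_mul, pderiv_pow, pd_av_even, pd_bv,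
      if_neg (show ¬ 2*i+1 = 2*l by omega)]
    rcases eq_or_ne i l with heq|hne
    · subst heq
      rw [if_pos rfl, dT_odd_out lam (n+1) (i+1) i (by omega),
        dT_odd_out lam n (i+2) i (by omega), Nat.sub_self,
        show i+(n+2)-2-i = n by omega, TT_zero]
      ring
    · rw [if_neg (show ¬ 2*i+1 = 2*l+1 by omega)]
      rcases eq_or_ne i (l+1) with rfl|hne2
      · rw [ih2 (l+1) (l+1) (by omega) (by omega),
          dT_odd_out lam n (l+2) (l+1) (by omega), Nat.sub_self,
          show l+1+(n+1)-2-(l+1) = l+(n+2)-2-(l+1) by omega,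
          show l+1-l = 1 by omega, TT_zero, TT_one]
        ring
      · rw [ih2 (l+1) i (by omega) (by omega), ih1 (l+2) i (by omega) (by omega),
          show l+1+(n+1)-2-i = l+(n+2)-2-i by omega,
          show l+2+n-2-i = l+(n+2)-2-i by omega,
          show i-l = (i-(l+2))+2 by omega, TT_left,
          show i-(l+2)+1 = i-(l+1) by omega]
        ring

def triM (lam : ℂ) (l n : ℕ) : Matrix (Fin n) (Fin n) R2 :=
  Matrix.of fun i j =>
    if (i:ℕ) = j then av lam (l+i)
    else if (j:ℕ) = (i:ℕ)+1 then bv (l+i)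
    else if (i:ℕ) = (j:ℕ)+1 then bv (l+j)
    else 0

lemma det_triM (lam : ℂ) : ∀ n l, (triM lam l n).det = TT lam l n := by
  intro n
  induction n using Nat.twoStepInduction with
  | zero => intro l; rw [Matrix.det_fin_zero, TT_zero]
  | one => intro l; rw [Matrix.det_fin_one, TT_one]; simp [triM]
  | more n ih1 ih2 =>
    intro l
    have hsA0 : Fin.succAbove (Fin.succ (0 : Fin (n+1))) 0 = 0 := Fin.succ_succAbove_zero 0
    have hsA : ∀ j : Fin n, Fin.succAbove (Fin.succ (0 : Fin (n+1))) j.succ = j.succ.succ := by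
      intro j
      rw [Fin.succ_succAbove_succ, Fin.succAbove_zero]
    have hsub1 : (triM lam l (n+2)).submatrix Fin.succ Fin.succ = triM lam (l+1) (n+1) := by
      refine Matrix.ext fun i j => ?_
      simp only [triM, Matrix.submatrix_apply, Matrix.of_apply, Fin.val_succ]
      split_ifs <;> first | rfl | omega | (congr 1; omega)
    have hsub2 : ((triM lam l (n+2)).submatrix Fin.succ
        (Fin.succAbove (Fin.succ 0))).submatrix Fin.succ Fin.succ = triM lam (l+2) n := by
      refine Matrix.ext fun i j => ?_
      simp only [Matrix.submatrix_apply, hsA, triM, Matrix.of_apply, Fin.val_succ]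
      split_ifs <;> first | rfl | omega | (congr 1; omega)
    have h00 : (triM lam l (n+2)) 0 0 = av lam l := by simp [triM]
    have h01 : (triM lam l (n+2)) (0 : Fin (n+2)) (Fin.succ 0) = bv l := by
      simp only [triM, Matrix.of_apply, Fin.val_succ, Fin.val_zero]
      norm_num
    have hzero : ∀ j : Fin n, (triM lam l (n+2)) 0 j.succ.succ = 0 := by
      intro j
      simp only [triM, Matrix.of_apply, Fin.val_succ, Fin.val_zero]
      split_ifs <;> first | rfl | omega | contradiction
    rw [Matrix.det_succ_row_zero, Fin.sum_univ_succ, Fin.sum_univ_succ]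
    have htail : ∀ j : Fin n,
        (-1:R2) ^ ((j.succ.succ : Fin (n+2)) : ℕ) * (triM lam l (n+2)) 0 j.succ.succ *
          ((triM lam l (n+2)).submatrix Fin.succ (Fin.succAbove j.succ.succ)).det = 0 := by
      intro j; rw [hzero]; ring
    rw [Finset.sum_congr rfl (fun j _ => htail j), Finset.sum_const_zero, h00, h01,
      Fin.succAbove_zero, hsub1, ih2]
    have hB : ((triM lam l (n+2)).submatrix Fin.succ (Fin.succAbove (Fin.succ 0))).det
        = bv l * TT lam (l+2) n := by
      rw [Matrix.det_succ_column_zero, Fin.sum_univ_succ]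
      have hB00 : ((triM lam l (n+2)).submatrix Fin.succ
          (Fin.succAbove (Fin.succ 0))) 0 0 = bv l := by
        simp only [Matrix.submatrix_apply, hsA0, triM,
          Matrix.of_apply, Fin.val_succ, Fin.val_zero]
        norm_num
      have hBtail : ∀ i : Fin n, ((triM lam l (n+2)).submatrix Fin.succ
          (Fin.succAbove (Fin.succ 0))) i.succ 0 = 0 := by
        intro i
        simp only [Matrix.submatrix_apply, hsA0, triM,
          Matrix.of_apply, Fin.val_succ, Fin.val_zero]
        split_ifs <;> first | rfl | omega | contradiction
      have hBt : ∀ i : Fin n, (-1:R2) ^ ((i.succ : Fin (n+1)) : ℕ) *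
          ((triM lam l (n+2)).submatrix Fin.succ (Fin.succAbove (Fin.succ 0))) i.succ 0 *
          (((triM lam l (n+2)).submatrix Fin.succ
            (Fin.succAbove (Fin.succ 0))).submatrix i.succ.succAbove Fin.succ).det = 0 := by
        intro i; rw [hBtail]; ring
      rw [Finset.sum_congr rfl (fun i _ => hBt i), Finset.sum_const_zero, hB00,
        Fin.succAbove_zero]
      rw [hsub2, ih1]
      simp
    rw [hB, TT_left]
    simp
    ring

lemma half1 (P x y : R2) :
    (-(2*x) * P) * (C (-(1/2):ℂ) * (x*y)) = x^2 * y * P := by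
  have h2 : (C ((1/2):ℂ) : R2) * 2 = 1 := by
    rw [show (2:R2) = C (2:ℂ) from (map_ofNat C 2).symm, ← C_mul]; norm_num
  calc (-(2*x) * P) * (C (-(1/2):ℂ) * (x*y))
      = (C ((1/2):ℂ) * 2) * (x^2 * y * P) := by rw [map_neg]; ring
    _ = x^2 * y * P := by rw [h2, one_mul]

lemma half2 (P x y : R2) :
    (-(2*x) * P) * (C ((1/2):ℂ) * (x*y)) = -(x^2 * y * P) := by
  have h2 : (C ((1/2):ℂ) : R2) * 2 = 1 := by
    rw [show (2:R2) = C (2:ℂ) from (map_ofNat C 2).symm, ← C_mul]; norm_num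
  calc (-(2*x) * P) * (C ((1/2):ℂ) * (x*y))
      = -((C ((1/2):ℂ) * 2) * (x^2 * y * P)) := by ring
    _ = -(x^2 * y * P) := by rw [h2, one_mul]

lemma sum_four (f : ℕ → R2) (c M : ℕ)
    (h0 : ∀ i, (i + 2 < c ∨ c + 2 < i ∨ i = c) → f i = 0) (hM : c + 3 ≤ M) :
    ∑ i ∈ Finset.range M, f i =
      (if 2 ≤ c then f (c-2) else 0) + (if 1 ≤ c then f (c-1) else 0)
        + f (c+1) + f (c+2) := by
  have hsplit : ∑ i ∈ Finset.range M, f i = ∑ i ∈ Finset.range (c+3), f i := by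
    rw [Finset.range_eq_Ico,
      ← Finset.sum_Ico_consecutive f (Nat.zero_le (c+3)) hM]
    have : ∑ i ∈ Finset.Ico (c+3) M, f i = 0 := by
      apply Finset.sum_eq_zero
      intro i hi
      rw [Finset.mem_Ico] at hi
      exact h0 i (by omega)
    rw [this, add_zero, Finset.range_eq_Ico]
  rw [hsplit]
  match c with
  | 0 =>
    rw [Finset.sum_range_succ, Finset.sum_range_succ, Finset.sum_range_one]
    rw [h0 0 (by omega)]
    norm_num
  | 1 =>
    rw [Finset.sum_range_succ, Finset.sum_range_succ, Finset.sum_range_succ,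
      Finset.sum_range_one]
    rw [h0 1 (by omega)]
    norm_num
  | (d+2) =>
    rw [show d+2+3 = d+5 by omega]
    rw [Finset.sum_range_succ, Finset.sum_range_succ, Finset.sum_range_succ,
      Finset.sum_range_succ, Finset.sum_range_succ]
    rw [Finset.sum_eq_zero (fun i hi => h0 i (by rw [Finset.mem_range] at hi; omega)),
      h0 (d+2) (by omega)]
    rw [if_pos (by omega), if_pos (by omega), show d+2-2 = d by omega,
      show d+2-1 = d+1 by omega, show d+2+1 = d+3 by omega, show d+2+2 = d+4 by omega]
    ring

def beta (lam : ℂ) (c i : ℕ) : R2 :=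
  if c = i+1 then (if Even i then -((C lam + X i) * X c) else -((C lam + X c) * X i))
  else if i = c+1 then (if Even c then (C lam + X c) * X i else (C lam + X i) * X c)
  else if c = i+2 then (if Even i then -2 * X (i+1)^2 else C (-(1/2):ℂ) * (X i * X c))
  else if i = c+2 then (if Even c then 2 * X (c+1)^2 else C ((1/2):ℂ) * (X i * X c))
  else 0

lemma beta_out (lam : ℂ) (c i : ℕ) (h : i + 2 < c ∨ c + 2 < i ∨ i = c) :
    beta lam c i = 0 := by
  unfold beta
  rw [if_neg (by omega), if_neg (by omega), if_neg (by omega), if_neg (by omega)]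


/-- for every `λ`, `det(ι(v) + λ·I)` is a Casimir polynomial for
the bracket `λΠ₁ + Π₂`. -/
theorem toda_char_det_is_casimir (k : ℕ) (hk : 1 ≤ k) :
    ∀ (lam : ℂ) (j : Fin (2 * k + 1)),
      ∑ i : Fin (2 * k + 1),
        pderiv i (iotaMat k + (C lam : MvPolynomial (Fin (2 * k + 1)) ℂ)
            • (1 : Matrix (Fin (k + 1)) (Fin (k + 1))
              (MvPolynomial (Fin (2 * k + 1)) ℂ))).det
          * (C lam * toda1 k i j + toda2 k i j) = 0 := by
  intro lam j
  apply rename_injective (Fin.val : Fin (2*k+1) → ℕ) Fin.val_injective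
  rw [map_zero, map_sum]
  have key1 : rename (Fin.val : Fin (2*k+1) → ℕ)
      (iotaMat k + (C lam : MvPolynomial (Fin (2 * k + 1)) ℂ)
        • (1 : Matrix (Fin (k + 1)) (Fin (k + 1))
          (MvPolynomial (Fin (2 * k + 1)) ℂ))).det = TT lam 0 (k+1) := by
    rw [AlgHom.map_det, AlgHom.mapMatrix_apply]
    rw [show (iotaMat k + (C lam : MvPolynomial (Fin (2 * k + 1)) ℂ)
        • (1 : Matrix (Fin (k + 1)) (Fin (k + 1))
          (MvPolynomial (Fin (2 * k + 1)) ℂ))).map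
          (rename (Fin.val : Fin (2*k+1) → ℕ)) = triM lam 0 (k+1) from ?_, det_triM]
    refine Matrix.ext fun i j => ?_
    simp only [Matrix.map_apply, Matrix.add_apply, Matrix.smul_apply, Matrix.one_apply,
      iotaMat, triM, Matrix.of_apply, smul_eq_mul, Fin.ext_iff, Nat.zero_add]
    split_ifs <;>
      first
        | omega
        | (simp only [map_add, _root_.map_mul, _root_.map_one, map_zero, mul_one,
            mul_zero, add_zero, rename_X, rename_C, av, bv]
           try first | ring | (congr 1 <;> omega))
  have key2 : ∀ i : Fin (2*k+1),
      rename (Fin.val : Fin (2*k+1) → ℕ) (C lam * toda1 k i j + toda2 k i j)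
        = beta lam (j : ℕ) (i : ℕ) := by
    intro i
    simp only [toda1, toda2, beta, Matrix.of_apply]
    split_ifs <;>
      first
        | omega
        | (simp only [map_add, _root_.map_mul, map_neg, _root_.map_one, map_zero,
            map_ofNat, map_pow, rename_X, rename_C, mul_zero, add_zero, zero_add, mul_one]
           try first | rfl | ring | omega)
  have hterm : ∀ i : Fin (2*k+1),
      rename (Fin.val : Fin (2*k+1) → ℕ)
        (pderiv i (iotaMat k + (C lam : MvPolynomial (Fin (2 * k + 1)) ℂ)
            • (1 : Matrix (Fin (k + 1)) (Fin (k + 1))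
              (MvPolynomial (Fin (2 * k + 1)) ℂ))).det
          * (C lam * toda1 k i j + toda2 k i j))
        = (fun v => pderiv v (TT lam 0 (k+1)) * beta lam (j : ℕ) v) (i : ℕ) := by
    intro i
    rw [_root_.map_mul, key2, ← pderiv_rename Fin.val_injective, key1]
  rw [Finset.sum_congr rfl (fun i _ => hterm i),
    Fin.sum_univ_eq_sum_range (fun v => pderiv v (TT lam 0 (k+1)) * beta lam (j : ℕ) v) (2*k+1)]
  set f : ℕ → R2 := fun v => pderiv v (TT lam 0 (k+1)) * beta lam (j : ℕ) v with hf
  have z1 : f (2*k+1) = 0 := by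
    rw [hf]; simp only
    rw [dT_odd_out lam (k+1) 0 k (by omega)]; ring
  have z2 : f (2*k+2) = 0 := by
    rw [hf]; simp only
    rw [show 2*k+2 = 2*(k+1) by omega, dT_even_out lam (k+1) 0 (k+1) (by omega)]; ring
  have hext : ∑ v ∈ Finset.range (2*k+1), f v = ∑ v ∈ Finset.range (2*k+3), f v := by
    have e1 : ∑ v ∈ Finset.range ((2*k+1)+1), f v = ∑ v ∈ Finset.range (2*k+1), f v := by
      rw [Finset.sum_range_succ, z1, add_zero]
    have e2 : ∑ v ∈ Finset.range (((2*k+1)+1)+1), f v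
        = ∑ v ∈ Finset.range ((2*k+1)+1), f v := by
      rw [Finset.sum_range_succ, show (2*k+1)+1 = 2*k+2 by omega, z2, add_zero]
    rw [show (2*k+3) = ((2*k+1)+1)+1 by omega, e2, e1]
  have hj : (j : ℕ) ≤ 2*k := by omega
  rw [hext, sum_four f (j : ℕ) (2*k+3)
    (fun i hi => by rw [hf]; simp only; rw [beta_out lam _ i hi]; ring) (by omega)]
  rcases Nat.even_or_odd (j : ℕ) with he | ho
  · obtain ⟨m, hm'⟩ := he
    have hm : (j : ℕ) = 2*m := by omega
    have hmk : m ≤ k := by omega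
    rw [hf]; simp only
    rw [hm]
    rcases eq_or_ne m 0 with rfl | hm0
    · rw [if_neg (by omega), if_neg (by omega)]
      rw [show 2*0+2 = 2*1 by omega]
      rw [dT_odd lam (k+1) 0 0 (by omega) (by omega),
          dT_even lam (k+1) 0 1 (by omega) (by omega)]
      rw [show 0+(k+1)-2-0 = k-1 by omega, show 0+(k+1)-1-1 = k-1 by omega]
      rw [show beta lam (2*0) (2*0+1) = (C lam + X (2*0)) * X (2*0+1) from by
            unfold beta
            rw [if_neg (by omega), if_pos (by omega), if_pos (by decide)],
          show beta lam (2*0) (2*1) = 2 * X (2*0+1)^2 from by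
            unfold beta
            rw [if_neg (by omega), if_neg (by omega), if_neg (by omega),
              if_pos (by omega), if_pos (by decide)]]
      rw [show (X (2*0+1) : R2) = bv 0 from rfl, show (C lam + X (2*0) : R2) = av lam 0 from rfl,
        TT_zero, TT_one]
      ring
    · rw [if_pos (by omega), if_pos (by omega)]
      rw [show 2*m-2 = 2*(m-1) by omega, show 2*m-1 = 2*(m-1)+1 by omega,
          show 2*m+2 = 2*(m+1) by omega]
      rw [dT_even lam (k+1) 0 (m-1) (by omega) (by omega),
          dT_odd lam (k+1) 0 (m-1) (by omega) (by omega)]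
      rw [show (m-1)-0 = m-1 by omega, show (m-1)+1 = m by omega,
          show 0+(k+1)-1-(m-1) = k+1-m by omega, show (m-1)+2 = m+1 by omega,
          show 0+(k+1)-2-(m-1) = k-m by omega]
      rw [show beta lam (2*m) (2*(m-1)) = -2 * X (2*(m-1)+1)^2 from by
            unfold beta
            rw [if_neg (by omega), if_neg (by omega), if_pos (by omega),
              if_pos (by rw [Nat.even_iff]; omega)],
          show beta lam (2*m) (2*(m-1)+1) = -((C lam + X (2*m)) * X (2*(m-1)+1)) from by
            unfold beta
            rw [if_pos (by omega), if_neg (by rw [Nat.even_iff]; omega)],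
          show beta lam (2*m) (2*m+1) = (C lam + X (2*m)) * X (2*m+1) from by
            unfold beta
            rw [if_neg (by omega), if_pos (by omega), if_pos (by rw [Nat.even_iff]; omega)],
          show beta lam (2*m) (2*(m+1)) = 2 * X (2*m+1)^2 from by
            unfold beta
            rw [if_neg (by omega), if_neg (by omega), if_neg (by omega),
              if_pos (by omega), if_pos (by rw [Nat.even_iff]; omega)]]
      rw [show (X (2*(m-1)+1) : R2) = bv (m-1) from rfl,
          show (X (2*m+1) : R2) = bv m from rfl,
          show (C lam + X (2*m) : R2) = av lam m from rfl]
      rcases eq_or_ne m k with rfl | hmk2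
      · rw [dT_odd_out lam (m+1) 0 m (by omega),
            dT_even_out lam (m+1) 0 (m+1) (by omega)]
        rw [show m+1-m = 1 by omega, show m-m = 0 by omega, TT_one, TT_zero]
        ring
      · rw [dT_odd lam (k+1) 0 m (by omega) (by omega),
            dT_even lam (k+1) 0 (m+1) (by omega) (by omega)]
        rw [show m-0 = m by omega, show 0+(k+1)-2-m = k-1-m by omega,
            show (m+1)-0 = m+1 by omega, show (m+1)+1 = m+2 by omega,
            show 0+(k+1)-1-(m+1) = k-1-m by omega]
        rw [show TT lam m (k+1-m)
              = av lam m * TT lam (m+1) (k-m) - bv m^2 * TT lam (m+2) (k-1-m) from by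
            rw [show k+1-m = (k-1-m)+2 by omega, TT_left, show (k-1-m)+1 = k-m by omega]]
        rw [show TT lam 0 (m+1)
              = av lam m * TT lam 0 m - bv (m-1)^2 * TT lam 0 (m-1) from by
            rw [show m+1 = (m-1)+2 by omega, TT_right lam (m-1) 0,
              show 0+(m-1)+1 = m by omega, show 0+(m-1) = m-1 by omega,
              show (m-1)+1 = m by omega]]
        ring
  · obtain ⟨m, hm⟩ := ho
    have hmk : m < k := by omega
    rw [hf]; simp only
    rw [hm]
    rw [show 2*m+1-1 = 2*m by omega, show 2*m+1+1 = 2*(m+1) by omega,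
        show 2*m+1+2 = 2*(m+1)+1 by omega]
    rw [if_pos (show 1 ≤ 2*m+1 by omega)]
    have hb2 : beta lam (2*m+1) (2*m) = -((C lam + X (2*m)) * X (2*m+1)) := by
      unfold beta
      rw [if_pos (by omega), if_pos (by rw [Nat.even_iff]; omega)]
    have hb3 : beta lam (2*m+1) (2*(m+1)) = (C lam + X (2*(m+1))) * X (2*m+1) := by
      unfold beta
      rw [if_neg (by omega), if_pos (by omega), if_neg (by rw [Nat.even_iff]; omega)]
    have hb4 : beta lam (2*m+1) (2*(m+1)+1)
        = C ((1/2):ℂ) * (X (2*(m+1)+1) * X (2*m+1)) := by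
      unfold beta
      rw [if_neg (by omega), if_neg (by omega), if_neg (by omega), if_pos (by omega),
        if_neg (by rw [Nat.even_iff]; omega)]
    rw [hb2, hb3, hb4]
    rw [dT_even lam (k+1) 0 m (by omega) (by omega),
        dT_even lam (k+1) 0 (m+1) (by omega) (by omega)]
    rw [show m-0 = m by omega, show 0+(k+1)-1-m = k-m by omega,
        show (m+1)-0 = m+1 by omega, show (m+1)+1 = m+2 by omega,
        show 0+(k+1)-1-(m+1) = k-m-1 by omega]
    rw [show (X (2*m+1) : R2) = bv m from rfl,
        show (C lam + X (2*m) : R2) = av lam m from rfl,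
        show (C lam + X (2*(m+1)) : R2) = av lam (m+1) from rfl,
        show (X (2*(m+1)+1) : R2) = bv (m+1) from rfl]
    rcases eq_or_ne (m+1) k with rfl | hk2
    · -- top boundary : k = m+1
      rw [dT_odd_out lam ((m+1)+1) 0 (m+1) (by omega)]
      rw [show m+1-m-1 = 0 by omega, show m+1-m = 1 by omega, TT_one, TT_zero]
      rcases eq_or_ne m 0 with rfl | hm0
      · rw [if_neg (by omega), TT_zero, TT_one]
        ring
      · rw [if_pos (by omega)]
        rw [show 2*m+1-2 = 2*(m-1)+1 by omega]
        rw [dT_odd lam ((m+1)+1) 0 (m-1) (by omega) (by omega)]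
        rw [show m-1-0 = m-1 by omega, show (m-1)+2 = m+1 by omega,
            show 0+(m+1+1)-2-(m-1) = 1 by omega, TT_one]
        rw [show beta lam (2*m+1) (2*(m-1)+1)
              = C (-(1/2):ℂ) * (X (2*(m-1)+1) * X (2*m+1)) from by
            unfold beta
            rw [if_neg (by omega), if_neg (by omega), if_pos (by omega),
              if_neg (by rw [Nat.even_iff]; omega)]]
        rw [show (X (2*(m-1)+1) : R2) = bv (m-1) from rfl,
            show (X (2*m+1) : R2) = bv m from rfl]
        rw [half1]
        rw [show TT lam 0 (m+1)
              = av lam m * TT lam 0 m - bv (m-1)^2 * TT lam 0 (m-1) from by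
            rw [show m+1 = (m-1)+2 by omega, TT_right lam (m-1) 0,
              show 0+(m-1)+1 = m by omega, show 0+(m-1) = m-1 by omega,
              show (m-1)+1 = m by omega]]
        ring
    · -- m + 1 < k
      rw [dT_odd lam (k+1) 0 (m+1) (by omega) (by omega)]
      rw [show (m+1)-0 = m+1 by omega, show (m+1)+2 = m+3 by omega,
          show 0+(k+1)-2-(m+1) = k-m-2 by omega]
      rw [half2]
      have hQ : TT lam (m+1) (k-m)
          = av lam (m+1) * TT lam (m+2) (k-m-1) - bv (m+1)^2 * TT lam (m+3) (k-m-2) := by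
        have h := TT_left lam (m+1) (k-m-2)
        rw [show (k-m-2)+2 = k-m by omega, show (k-m-2)+1 = k-m-1 by omega,
          show (m+1)+1 = m+2 by omega, show (m+1)+2 = m+3 by omega] at h
        exact h
      rcases eq_or_ne m 0 with rfl | hm0
      · rw [if_neg (by omega), TT_zero, TT_one]
        rw [hQ]
        ring
      · rw [if_pos (by omega)]
        rw [show 2*m+1-2 = 2*(m-1)+1 by omega]
        rw [dT_odd lam (k+1) 0 (m-1) (by omega) (by omega)]
        rw [show m-1-0 = m-1 by omega, show (m-1)+2 = m+1 by omega,
            show 0+(k+1)-2-(m-1) = k-m by omega]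
        rw [show beta lam (2*m+1) (2*(m-1)+1)
              = C (-(1/2):ℂ) * (X (2*(m-1)+1) * X (2*m+1)) from by
            unfold beta
            rw [if_neg (by omega), if_neg (by omega), if_pos (by omega),
              if_neg (by rw [Nat.even_iff]; omega)]]
        rw [show (X (2*(m-1)+1) : R2) = bv (m-1) from rfl,
            show (X (2*m+1) : R2) = bv m from rfl]
        rw [half1]
        rw [hQ]
        rw [show TT lam 0 (m+1)
              = av lam m * TT lam 0 m - bv (m-1)^2 * TT lam 0 (m-1) from by
            rw [show m+1 = (m-1)+2 by omega, TT_right lam (m-1) 0,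
              show 0+(m-1)+1 = m by omega, show 0+(m-1) = m-1 by omega,
              show (m-1)+1 = m by omega]]
        ring
end
end

section
/- Let k ≥ 1 and consider the Kronecker pair K_{2k−1} on ℂ^{2k−1}. Suppose (β_i)_{i≥0} is a sequence of vectors in ℂ^{2k−1} such that ω₁(β₀, w) = 0 for all w ∈ ℂ^{2k−1}, and ω₂(β_i, w) = ω₁(β_{i+1}, w) for all w ∈ ℂ^{2k−1} and all i ≥ 0. Then every β_i lies in the k-dimensional subspace spanned by the even-indexed basis vectors e₀, e₂, …, e_{2k−2}. -/
open Matrix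

noncomputable section

def kronMat1 (n : ℕ) : Matrix (Fin n) (Fin n) ℂ := fun i j =>
  if Even i.val ∧ j.val = i.val + 1 then 1
  else if Even j.val ∧ i.val = j.val + 1 then -1 else 0

def kronMat2 (n : ℕ) : Matrix (Fin n) (Fin n) ℂ := fun i j =>
  if ¬ Even i.val ∧ j.val = i.val + 1 then 1
  else if ¬ Even j.val ∧ i.val = j.val + 1 then -1 else 0

def formOf {n : ℕ} (M : Matrix (Fin n) (Fin n) ℂ) (x y : Fin n → ℂ) : ℂ :=
  x ⬝ᵥ M.mulVec y

lemma formOf_single {n : ℕ} (M : Matrix (Fin n) (Fin n) ℂ) (x : Fin n → ℂ) (j : Fin n) :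
    formOf M x (Pi.single j 1) = ∑ i, x i * M i j := by
  simp [formOf, dotProduct, mulVec, Pi.single_apply, mul_ite]

lemma sumM1 {n : ℕ} (x : Fin n → ℂ) (p : ℕ) (hp : Even p) (h1 : p + 1 < n) :
    ∑ i, x i * kronMat1 n i ⟨p, by omega⟩ = -x ⟨p + 1, h1⟩ := by
  rw [Finset.sum_eq_single (⟨p + 1, h1⟩ : Fin n)]
  · rw [kronMat1]
    rw [if_neg, if_pos]
    · ring
    · exact ⟨hp, rfl⟩
    · rintro ⟨-, h⟩; simp only [Fin.val_mk] at h; omega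
  · intro i _ hne
    rw [kronMat1, if_neg, if_neg, mul_zero]
    · rintro ⟨-, h⟩
      exact hne (Fin.ext h)
    · rintro ⟨he, h⟩
      simp only [Fin.val_mk] at h
      rw [Nat.even_iff] at he hp
      omega
  · intro h; exact absurd (Finset.mem_univ _) h

lemma sumM2_even {n : ℕ} (x : Fin n → ℂ) (p : ℕ) (hp : Even p) (hpn : p < n)
    (hx : ∀ m : Fin n, Odd m.val → x m = 0) :
    ∑ i, x i * kronMat2 n i ⟨p, hpn⟩ = 0 := by
  apply Finset.sum_eq_zero
  intro i _
  by_cases h : ¬Even i.val ∧ p = i.val + 1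
  · rw [hx i (Nat.not_even_iff_odd.mp h.1), zero_mul]
  · rw [kronMat2, if_neg h, if_neg, mul_zero]
    rintro ⟨he, -⟩
    exact he hp

/-- an anchored Lenard chain on the Kronecker pair `K_{2k-1}`
lies in the span of the even-indexed basis vectors. -/
theorem kronecker_lenard_chain_in_even_span (k : ℕ) (hk : 1 ≤ k)
    (β : ℕ → Fin (2 * k - 1) → ℂ)
    (hanch : ∀ w, formOf (kronMat1 (2 * k - 1)) (β 0) w = 0)
    (hrec : ∀ i w, formOf (kronMat2 (2 * k - 1)) (β i) w
        = formOf (kronMat1 (2 * k - 1)) (β (i + 1)) w) :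
    ∀ i, β i ∈ Submodule.span ℂ (Set.range fun j : Fin k =>
      (Pi.single (⟨2 * j.val, by have := j.isLt; omega⟩ : Fin (2 * k - 1)) 1 :
        Fin (2 * k - 1) → ℂ)) := by
  have key : ∀ i, ∀ j : Fin (2 * k - 1), Odd j.val → β i j = 0 := by
    intro i
    induction i with
    | zero =>
      intro j hj
      obtain ⟨t, ht⟩ := hj
      have hjlt := j.isLt
      have h2t1 : 2 * t + 1 < 2 * k - 1 := by omega
      have h := hanch (Pi.single (⟨2 * t, by omega⟩ : Fin (2 * k - 1)) 1)
      rw [formOf_single, sumM1 (β 0) (2 * t) (even_two_mul t) h2t1] at h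
      have hj' : j = ⟨2 * t + 1, h2t1⟩ := Fin.ext (by simp only [Fin.val_mk]; omega)
      rw [hj']
      linear_combination -h
    | succ i ih =>
      intro j hj
      obtain ⟨t, ht⟩ := hj
      have hjlt := j.isLt
      have h2t1 : 2 * t + 1 < 2 * k - 1 := by omega
      have h := hrec i (Pi.single (⟨2 * t, by omega⟩ : Fin (2 * k - 1)) 1)
      rw [formOf_single, formOf_single,
        sumM1 (β (i + 1)) (2 * t) (even_two_mul t) h2t1,
        sumM2_even (β i) (2 * t) (even_two_mul t) (by omega) ih] at h
      have hj' : j = ⟨2 * t + 1, h2t1⟩ := Fin.ext (by simp only [Fin.val_mk]; omega)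
      rw [hj']
      linear_combination h
  intro i
  have hrepr : β i = ∑ j : Fin k,
      β i ⟨2 * j.val, by have := j.isLt; omega⟩ •
        (Pi.single (⟨2 * j.val, by have := j.isLt; omega⟩ : Fin (2 * k - 1)) 1 :
          Fin (2 * k - 1) → ℂ) := by
    funext m
    rw [Finset.sum_apply]
    rcases Nat.even_or_odd m.val with ⟨t, ht⟩ | hm
    · have htk : t < k := by have := m.isLt; omega
      rw [Finset.sum_eq_single (⟨t, htk⟩ : Fin k)]
      · have : m = ⟨2 * t, by have := m.isLt; omega⟩ := Fin.ext (by simp only [Fin.val_mk]; omega)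
        rw [this]
        simp
      · intro b _ hbne
        have hne : m ≠ ⟨2 * b.val, by have := b.isLt; omega⟩ := by
          intro hc
          apply hbne
          apply Fin.ext
          have : m.val = 2 * b.val := by rw [hc]
          simp only [Fin.val_mk] at *
          omega
        simp [Pi.single_apply, hne]
      · intro h; exact absurd (Finset.mem_univ _) h
    · rw [key i m hm]
      symm
      apply Finset.sum_eq_zero
      intro b _
      have hne : m ≠ ⟨2 * b.val, by have := b.isLt; omega⟩ := by
        intro hc
        rw [Nat.odd_iff] at hm
        have : m.val = 2 * b.val := by rw [hc]
        omega
      simp [Pi.single_apply, hne]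
  rw [hrepr]
  exact Submodule.sum_mem _ fun j _ =>
    Submodule.smul_mem _ _ (Submodule.subset_span ⟨j, rfl⟩)
end
end
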